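/- Let φ : X → Y be a spectral map of spectral spaces satisfying the weak lifting property: for every specialization y ⤳ y' in Y there exist points x₀, x₁, …, xₙ in X with φ(x₀) = y', φ(xₙ) = y, and such that for each i, the point xᵢ is a specialization of some point lying in the same fiber of φ as x_{i+1}. Then φ is a topological quotient map. -/

import Mathlib

/-- A spectral space: quasi-compact, T0, sober, and the quasi-compact open subsets
form a basis closed under finite intersection. -/
def IsSpectralSpace (X : Type*) [TopologicalSpace X] : Prop :=
  CompactSpace X ∧ T0Space X ∧ QuasiSober X ∧
  TopologicalSpace.IsTopologicalBasis {U : Set X | IsOpen U ∧ IsCompact U} ∧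
  ∀ U V : Set X, IsOpen U → IsCompact U → IsOpen V → IsCompact V → IsCompact (U ∩ V)

/-- A spectral quotient map: a surjective spectral map such that any subset of the
target whose preimage is quasi-compact open is itself quasi-compact open. -/
def IsSpectralQuotientMap {X Y : Type*} [TopologicalSpace X] [TopologicalSpace Y]
    (φ : X → Y) : Prop :=
  Function.Surjective φ ∧ IsSpectralMap φ ∧
  ∀ C : Set Y, IsOpen (φ ⁻¹' C) → IsCompact (φ ⁻¹' C) → IsOpen C ∧ IsCompact C

/-- A spectral map of spectral spaces satisfying the weak lifting property is a
topological quotient map. Here `y ⤳ y'` is expressed as `y' ∈ closure {y}`. -/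
theorem stmt_5 {X Y : Type*} [TopologicalSpace X] [TopologicalSpace Y]
    (hX : IsSpectralSpace X) (hY : IsSpectralSpace Y) (φ : X → Y)
    (hspec : IsSpectralMap φ)
    (hlift : ∀ y y' : Y, y' ∈ closure {y} →
      ∃ (n : ℕ) (x : Fin (n + 1) → X),
        φ (x 0) = y' ∧ φ (x (Fin.last n)) = y ∧
        ∀ i : Fin n, ∃ w : X, φ w = φ (x i.succ) ∧ x i.castSucc ∈ closure {w}) :
    Topology.IsQuotientMap φ := by
  obtain ⟨hXc, hXt0, hXsober, hXbasis, hXinter⟩ := hX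
  obtain ⟨hYc, hYt0, hYsober, hYbasis, hYinter⟩ := hY
  have hsurj : Function.Surjective φ := by
    intro y
    obtain ⟨n, x, h0, -, -⟩ := hlift y y (subset_closure rfl)
    exact ⟨x 0, h0⟩
  rw [Topology.isQuotientMap_iff]
  refine ⟨.of_isOpen_preimage_iff_isOpen fun C => ⟨fun hC => ?_, fun hC => hC.preimage hspec.continuous⟩, hsurj⟩
  set F : Set X := (φ ⁻¹' C)ᶜ with hFdef
  have hFclosed : IsClosed F := hC.isClosed_compl
  have hFmem : ∀ x : X, x ∈ F ↔ φ x ∉ C := fun x => Iff.rfl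
  -- `Cᶜ` is stable under specialization, by the lifting hypothesis.
  have hstab : ∀ y y' : Y, y ∉ C → y' ∈ closure {y} → y' ∉ C := by
    intro y y' hy hyy'
    obtain ⟨n, x, h0, hn, hstep⟩ := hlift y y' hyy'
    have key : ∀ i : Fin (n + 1), φ (x i) ∉ C := by
      intro i
      induction i using Fin.reverseInduction with
      | last => rw [hn]; exact hy
      | cast i ih =>
        obtain ⟨w, hw, hclos⟩ := hstep i
        have hwF : w ∈ F := by rw [hFmem, hw]; exact ih
        have hxF : x i.castSucc ∈ F :=
          closure_minimal (Set.singleton_subset_iff.2 hwF) hFclosed hclos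
        exact (hFmem _).1 hxF
    rw [← h0]; exact key 0
  -- It suffices to show that `Cᶜ` is closed.
  rw [← isClosed_compl_iff]
  refine isClosed_of_closure_subset fun y hy => ?_
  -- The family of closed sets meeting `φ⁻¹ U ∩ F` for every qc open nbhd `U` of `y`.
  set S : Set (Set X) :=
    {Z | IsClosed Z ∧ ∀ U : Set Y, IsOpen U → IsCompact U → y ∈ U →
      (Z ∩ (φ ⁻¹' U ∩ F)).Nonempty} with hSdef
  have hK : ∀ U : Set Y, IsOpen U → IsCompact U → IsCompact (φ ⁻¹' U ∩ F) := by
    intro U hU hUc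
    exact (hspec.isCompact_preimage_of_isOpen hU hUc).inter_right hFclosed
  have hunivS : Set.univ ∈ S := by
    refine ⟨isClosed_univ, fun U hU hUc hyU => ?_⟩
    obtain ⟨y₁, hy₁U, hy₁C⟩ := mem_closure_iff.1 hy U hU hyU
    obtain ⟨x₁, hx₁⟩ := hsurj y₁
    exact ⟨x₁, Set.mem_univ _, by rw [Set.mem_preimage, hx₁]; exact hy₁U,
      by rw [hFmem, hx₁]; exact hy₁C⟩
  -- Zorn's lemma: a minimal element of `S`.
  have hchaincond : ∀ c ⊆ S, IsChain (· ⊆ ·) c → c.Nonempty →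
      ∃ lb ∈ S, ∀ s ∈ c, lb ⊆ s := by
    intro c hcS hchain hcne
    refine ⟨⋂₀ c, ⟨isClosed_sInter fun Z hZ => (hcS hZ).1, fun U hU hUc hyU => ?_⟩,
      fun s hs => Set.sInter_subset_of_mem hs⟩
    haveI : Nonempty c := hcne.to_subtype
    have h1 : ((φ ⁻¹' U ∩ F) ∩ ⋂ Z : c, (Z : Set X)).Nonempty := by
      refine (hK U hU hUc).inter_iInter_nonempty _ (fun Z => (hcS Z.2).1) fun u => ?_
      rcases u.eq_empty_or_nonempty with rfl | hune
      · simp only [Finset.notMem_empty, Set.iInter_of_empty, Set.iInter_univ,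
          Set.inter_univ]
        obtain ⟨Z₀⟩ := (inferInstance : Nonempty c)
        obtain ⟨z, hz⟩ := (hcS Z₀.2).2 U hU hUc hyU
        exact ⟨z, hz.2⟩
      · -- find a minimal element of the finite nonempty subchain
        obtain ⟨m, hmu, hmmin⟩ := u.exists_minimal hune
        obtain ⟨z, hz1, hz2⟩ := (hcS m.2).2 U hU hUc hyU
        refine ⟨z, hz2, ?_⟩
        simp only [Set.mem_iInter]
        intro Z hZu
        rcases eq_or_ne Z m with rfl | hne
        · exact hz1
        · rcases hchain.total m.2 Z.2 with h | h
          · exact h hz1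
          · exact absurd (le_antisymm (show Z ≤ m from h) (hmmin hZu h)) hne
    obtain ⟨z, hz1, hz2⟩ := h1
    refine ⟨z, ?_, hz1⟩
    rw [Set.mem_sInter]
    intro Z hZc
    have := Set.mem_iInter.1 hz2 ⟨Z, hZc⟩
    exact this
  obtain ⟨Z, -, hZmin⟩ := zorn_superset_nonempty S hchaincond Set.univ hunivS
  obtain ⟨hZclosed, hZint⟩ := hZmin.1
  -- `Z ⊆ F` by minimality.
  have hZF : Z ⊆ F := by
    have h1 : Z ∩ F ∈ S := by
      refine ⟨hZclosed.inter hFclosed, fun U hU hUc hyU => ?_⟩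
      obtain ⟨z, hz1, hz2⟩ := hZint U hU hUc hyU
      exact ⟨z, ⟨hz1, hz2.2⟩, hz2⟩
    have := hZmin.2 h1 Set.inter_subset_left
    exact fun z hz => ((this hz).2)
  -- `Z` is irreducible.
  have hZne : Z.Nonempty := by
    obtain ⟨z, hz, -⟩ := hZint Set.univ isOpen_univ CompactSpace.isCompact_univ
      (Set.mem_univ _)
    exact ⟨z, hz⟩
  have hZirr : IsIrreducible Z := by
    refine ⟨hZne, fun u v hu hv hZu hZv => ?_⟩
    by_contra hcon
    rw [Set.not_nonempty_iff_eq_empty] at hcon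
    -- if `Z ∩ uᶜ ∈ S` then `Z ⊆ uᶜ` by minimality, contradicting `Z ∩ u ≠ ∅`.
    have hu' : Z ∩ uᶜ ∉ S := by
      intro h
      have := hZmin.2 h Set.inter_subset_left
      obtain ⟨z, hz1, hz2⟩ := hZu
      exact (this hz1).2 hz2
    have hv' : Z ∩ vᶜ ∉ S := by
      intro h
      have := hZmin.2 h Set.inter_subset_left
      obtain ⟨z, hz1, hz2⟩ := hZv
      exact (this hz1).2 hz2
    simp only [hSdef, Set.mem_setOf_eq, not_and, not_forall] at hu' hv'
    obtain ⟨U₁, hU₁, hU₁c, hyU₁, hne₁⟩ := hu' (hZclosed.inter (isClosed_compl_iff.2 hu))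
    obtain ⟨U₂, hU₂, hU₂c, hyU₂, hne₂⟩ := hv' (hZclosed.inter (isClosed_compl_iff.2 hv))
    rw [Set.not_nonempty_iff_eq_empty] at hne₁ hne₂
    obtain ⟨z, hz1, hz2, hz3⟩ := hZint (U₁ ∩ U₂) (hU₁.inter hU₂)
      (hYinter U₁ U₂ hU₁ hU₁c hU₂ hU₂c) ⟨hyU₁, hyU₂⟩
    have hzu : z ∈ u := by
      by_contra h
      exact Set.eq_empty_iff_forall_notMem.1 hne₁ z ⟨⟨hz1, h⟩, hz2.1, hz3⟩
    have hzv : z ∈ v := by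
      by_contra h
      exact Set.eq_empty_iff_forall_notMem.1 hne₂ z ⟨⟨hz1, h⟩, hz2.2, hz3⟩
    exact Set.eq_empty_iff_forall_notMem.1 hcon z ⟨hz1, hzu, hzv⟩
  -- Generic point of `Z`.
  obtain ⟨x₀, hx₀⟩ := hXsober.sober hZirr hZclosed
  have hx₀Z : x₀ ∈ Z := hx₀ ▸ subset_closure rfl
  have hx₀F : x₀ ∈ F := hZF hx₀Z
  -- `y` specializes from `φ x₀`.
  have hyx₀ : y ∈ closure {φ x₀} := by
    rw [mem_closure_iff]
    intro V hV hyV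
    obtain ⟨U, hUb, hyU, hUV⟩ := hYbasis.exists_subset_of_mem_open hyV hV
    obtain ⟨z, hz1, hz2, -⟩ := hZint U hUb.1 hUb.2 hyU
    have hzc : z ∈ closure {x₀} := hx₀ ▸ hz1
    obtain ⟨x', hx'1, hx'2⟩ := mem_closure_iff.1 hzc (φ ⁻¹' U) (hUb.1.preimage hspec.continuous) hz2
    rw [Set.mem_singleton_iff] at hx'2
    exact ⟨φ x₀, hUV (hx'2 ▸ hx'1), rfl⟩
  exact hstab (φ x₀) y ((hFmem x₀).1 hx₀F) hyx₀
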